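/- Let G be a countable discrete group and let f be an n×n matrix over ℂ[G]. If ξ₁, ξ₂ ∈ M_n(ℓ²(G)) both satisfy fξ₁ = 1̂ and fξ₂ = 1̂, then ξ₁ = ξ₂; i.e., the ℓ² formal inverse of f, when it exists, is unique. -/

import Mathlib

open scoped Classical ENNReal

noncomputable section

/-- Convolution of a finitely supported `a : ℂ[G]` with `ξ : G → ℂ`:
`(a*ξ)(g) = ∑_{h} a(h) ξ(h⁻¹g)`. -/
def fconv {G : Type*} [Group G] (a : G →₀ ℂ) (ξ : G → ℂ) : G → ℂ :=
  fun g => a.sum fun h c => c * ξ (h⁻¹ * g)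

/-- The matrix `1̂ ∈ M_n(ℓ²(G))` with diagonal entries `δ_e` and zero off-diagonal entries. -/
def oneHat (G : Type*) [Group G] (n : ℕ) : Matrix (Fin n) (Fin n) (G → ℂ) :=
  fun i j g => if i = j ∧ g = 1 then 1 else 0

/-- `(fξ)_{ij} = ∑_k f_{ik} * ξ_{kj}`. -/
def matConv {G : Type*} [Group G] {n : ℕ} (f : Matrix (Fin n) (Fin n) (G →₀ ℂ))
    (ξ : Matrix (Fin n) (Fin n) (G → ℂ)) : Matrix (Fin n) (Fin n) (G → ℂ) :=
  fun i j => ∑ k, fconv (f i k) (ξ k j)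

open scoped ComplexConjugate
set_option maxHeartbeats 1000000
set_option synthInstance.maxHeartbeats 400000
set_option linter.unusedSectionVars false

namespace FIU

variable {G : Type*} [Group G]

abbrev L2 (G : Type*) := lp (fun _ : G => ℂ) 2

lemma memℓp_comp (x : L2 G) (e : G ≃ G) : Memℓp (fun g => x (e g)) 2 := by
  apply memℓp_gen
  have := ((lp.memℓp x).summable (p := 2) (by norm_num)).comp_injective e.injective
  exact this

/-- reindexing isometry of `ℓ²(G)` along a bijection of `G`. -/
def lpCongr (e : G ≃ G) : L2 G ≃ₗᵢ[ℂ] L2 G where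
  toFun x := ⟨fun g => x (e g), memℓp_comp x e⟩
  invFun x := ⟨fun g => x (e.symm g), memℓp_comp x e.symm⟩
  map_add' x y := by ext g; simp [lp.coeFn_add]; rfl
  map_smul' c x := by ext g; simp [lp.coeFn_smul]
  left_inv x := by ext g; simp
  right_inv x := by ext g; simp
  norm_map' x := by
    have h2 : 0 < (2 : ℝ≥0∞).toReal := by norm_num
    rw [lp.norm_eq_tsum_rpow h2, lp.norm_eq_tsum_rpow h2]
    congr 1
    exact e.tsum_eq (f := fun g => ‖x g‖ ^ (2:ℝ≥0∞).toReal)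

@[simp] lemma lpCongr_apply (e : G ≃ G) (x : L2 G) (g : G) :
    (lpCongr e x : G → ℂ) g = x (e g) := rfl

end FIU

noncomputable section S2
namespace FIU
set_option linter.unusedSectionVars false

variable {G : Type*} [Group G]

/-- left translation: `(lTrans h x) g = x (h⁻¹ g)`. -/
def lTrans (h : G) : L2 G ≃ₗᵢ[ℂ] L2 G := lpCongr (Equiv.mulLeft h⁻¹)

@[simp] lemma lTrans_apply (h : G) (x : L2 G) (g : G) :
    (lTrans h x : G → ℂ) g = x (h⁻¹ * g) := rfl

/-- right translation: `(rTrans γ x) g = x (g γ)`. -/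
def rTrans (γ : G) : L2 G ≃ₗᵢ[ℂ] L2 G := lpCongr (Equiv.mulRight γ)

@[simp] lemma rTrans_apply (γ : G) (x : L2 G) (g : G) :
    (rTrans γ x : G → ℂ) g = x (g * γ) := rfl

/-- convolution by a finitely supported function, as a continuous linear map on `ℓ²`. -/
def lam (a : G →₀ ℂ) : L2 G →L[ℂ] L2 G :=
  a.sum fun h c => c • (lTrans h).toLinearIsometry.toContinuousLinearMap

lemma lam_apply (a : G →₀ ℂ) (x : L2 G) (g : G) :
    (lam a x : G → ℂ) g = fconv a (⇑x) g := by
  rw [lam, fconv, Finsupp.sum, Finsupp.sum, ContinuousLinearMap.coe_sum',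
    Finset.sum_apply, lp.coeFn_sum, Finset.sum_apply]
  exact Finset.sum_congr rfl fun h _ => by simp [lp.coeFn_smul]

lemma lam_rTrans (a : G →₀ ℂ) (γ : G) (x : L2 G) :
    lam a (rTrans γ x) = rTrans γ (lam a x) := by
  ext g
  rw [lam_apply, rTrans_apply, lam_apply, fconv, fconv]
  refine Finset.sum_congr rfl fun h _ => ?_
  simp [mul_assoc]

variable {n : ℕ}

abbrev Hn (G : Type*) (n : ℕ) := PiLp 2 (fun _ : Fin n => L2 G)

/-- right translation on `Hn`, componentwise. -/
def RT (γ : G) : Hn G n ≃ₗᵢ[ℂ] Hn G n :=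
  LinearIsometryEquiv.piLpCongrRight 2 (fun _ : Fin n => rTrans γ)

@[simp] lemma RT_apply (γ : G) (x : Hn G n) (i : Fin n) :
    RT γ x i = rTrans γ (x i) := rfl

/-- the operator on `Hn` given by a matrix of group-algebra elements. -/
def TOp (f : Matrix (Fin n) (Fin n) (G →₀ ℂ)) : Hn G n →L[ℂ] Hn G n :=
  ((PiLp.continuousLinearEquiv 2 ℂ (fun _ : Fin n => L2 G)).symm.toContinuousLinearMap).comp
    (ContinuousLinearMap.pi fun i => ∑ k, (lam (f i k)).comp
      ((ContinuousLinearMap.proj k).comp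
        (PiLp.continuousLinearEquiv 2 ℂ (fun _ : Fin n => L2 G)).toContinuousLinearMap))

lemma TOp_apply (f : Matrix (Fin n) (Fin n) (G →₀ ℂ)) (x : Hn G n) (i : Fin n) :
    TOp f x i = ∑ k, lam (f i k) (x k) := by
  simp [TOp, ContinuousLinearMap.pi_apply, ContinuousLinearMap.sum_apply]

lemma TOp_comm (f : Matrix (Fin n) (Fin n) (G →₀ ℂ)) (γ : G) (x : Hn G n) :
    TOp f (RT γ x) = RT γ (TOp f x) := by
  ext1 i
  rw [TOp_apply, RT_apply, TOp_apply, map_sum]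
  exact Finset.sum_congr rfl fun k _ => by rw [RT_apply, lam_rTrans]

end FIU
end S2

noncomputable section S3
namespace FIU
set_option linter.unusedSectionVars false
open ContinuousLinearMap

local notation "⟪" x ", " y "⟫" => @inner ℂ _ _ x y

variable {G : Type*} [Group G] {n : ℕ}

/-- the standard basis-type vectors of `Hn`. -/
def d (i : Fin n) : Hn G n := WithLp.toLp 2 fun k => if k = i then lp.single 2 (1 : G) (1 : ℂ) else 0

def u (i : Fin n) (g : G) : Hn G n := RT g⁻¹ (d i)

lemma u_apply (i : Fin n) (g : G) (k : Fin n) :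
    u i g k = if k = i then lp.single 2 g (1 : ℂ) else 0 := by
  rw [u, RT_apply]
  by_cases h : k = i
  · simp only [d, PiLp.toLp_apply, if_pos h]
    ext t
    simp only [rTrans_apply, lp.single_apply]
    by_cases ht : t = g
    · subst ht; simp
    · rw [Pi.single_eq_of_ne ht, Pi.single_eq_of_ne (by simpa [mul_inv_eq_one] using ht)]
  · simp [d, if_neg h]

@[simp] lemma u_def (i : Fin n) (g : G) : u i g = RT g⁻¹ (d i) := rfl

lemma inner_u (i : Fin n) (g : G) (y : Hn G n) : ⟪u i g, y⟫ = y i g := by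
  rw [PiLp.inner_apply]
  rw [Finset.sum_eq_single i]
  · rw [u_apply, if_pos rfl, lp.inner_single_left]
    simp [RCLike.inner_apply]
  · intro k _ hk
    rw [u_apply, if_neg hk, inner_zero_left]
  · simp

lemma inner_Hn (x y : Hn G n) :
    ⟪x, y⟫ = ∑ k, ∑' g, conj (x k g) * (y k g) := by
  rw [PiLp.inner_apply]
  refine Finset.sum_congr rfl fun k _ => ?_
  rw [lp.inner_eq_tsum]
  exact tsum_congr fun g => RCLike.inner_apply' _ _

lemma Hn_ext {x y : Hn G n} (h : ∀ i g, x i g = y i g) : x = y := by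
  refine PiLp.ext fun i => ?_
  exact lp.ext (funext fun g => h i g)

lemma RT_inv_cancel (γ : G) (z : Hn G n) : RT γ (RT γ⁻¹ z) = z := by
  apply Hn_ext
  intro i g
  simp [RT_apply, rTrans_apply]

lemma RT_inv_cancel' (γ : G) (z : Hn G n) : RT γ⁻¹ (RT γ z) = z := by
  have := RT_inv_cancel γ⁻¹ z; rwa [inv_inv] at this

lemma u_inv (i : Fin n) (g : G) : u i g⁻¹ = RT g (d i) := by rw [u_def, inv_inv]

instance : CompleteSpace (Hn G n) := inferInstanceAs (CompleteSpace (PiLp 2 (fun _ : Fin n => L2 G)))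

/-- operators commuting with all right translations. -/
def Comm (S : Hn G n →L[ℂ] Hn G n) : Prop := ∀ (γ : G) (x : Hn G n), S (RT γ x) = RT γ (S x)

lemma Comm.mul {S T : Hn G n →L[ℂ] Hn G n} (hS : Comm S) (hT : Comm T) : Comm (S * T) :=
  fun γ x => by rw [mul_apply_eq_comp, hT, hS, mul_apply_eq_comp]

lemma Comm.one : Comm (1 : Hn G n →L[ℂ] Hn G n) := fun γ x => rfl

lemma Comm.pow {S : Hn G n →L[ℂ] Hn G n} (hS : Comm S) (k : ℕ) : Comm (S ^ k) := by
  induction k with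
  | zero => simpa using Comm.one
  | succ m ih => rw [pow_succ]; exact ih.mul hS

lemma Comm.smul {S : Hn G n →L[ℂ] Hn G n} (hS : Comm S) (c : ℂ) : Comm (c • S) :=
  fun γ x => by simp [hS γ x]

lemma Comm.sub {S T : Hn G n →L[ℂ] Hn G n} (hS : Comm S) (hT : Comm T) : Comm (S - T) :=
  fun γ x => by simp [sub_apply, hS γ x, hT γ x]

lemma Comm.adjoint {S : Hn G n →L[ℂ] Hn G n} (hS : Comm S) :
    Comm (ContinuousLinearMap.adjoint S) := by
  intro γ x
  apply ext_inner_left ℂ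
  intro y
  rw [adjoint_inner_right]
  calc ⟪S y, RT γ x⟫ = ⟪RT γ⁻¹ (S y), RT γ⁻¹ (RT γ x)⟫ := ((RT γ⁻¹).inner_map_map _ _).symm
    _ = ⟪S (RT γ⁻¹ y), x⟫ := by rw [RT_inv_cancel', ← hS]
    _ = ⟪RT γ⁻¹ y, ContinuousLinearMap.adjoint S x⟫ := (adjoint_inner_right _ _ _).symm
    _ = ⟪y, RT γ (ContinuousLinearMap.adjoint S x)⟫ := by
        rw [← (RT γ).inner_map_map (RT γ⁻¹ y) (ContinuousLinearMap.adjoint S x),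
          RT_inv_cancel]

lemma adj_coef {A : Hn G n →L[ℂ] Hn G n} (hA : Comm A) (i k : Fin n) (g : G) :
    (ContinuousLinearMap.adjoint A (d i)) k g = conj ((A (d k)) i g⁻¹) := by
  rw [← inner_u k g, adjoint_inner_right, u_def, hA, ← inner_conj_symm]
  congr 1
  calc ⟪d i, RT g⁻¹ (A (d k))⟫ = ⟪RT g⁻¹ (RT g (d i)), RT g⁻¹ (A (d k))⟫ := by
        rw [RT_inv_cancel']
    _ = ⟪RT g (d i), A (d k)⟫ := (RT g⁻¹).inner_map_map _ _
    _ = (A (d k)) i g⁻¹ := by rw [← u_inv]; exact inner_u _ _ _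

/-- the trace. -/
def tr (S : Hn G n →L[ℂ] Hn G n) : ℂ := ∑ i, ⟪d i, S (d i)⟫

lemma tr_mul_expand {A B : Hn G n →L[ℂ] Hn G n} (hA : Comm A) :
    tr (A * B) = ∑ i, ∑ k, ∑' g, (A (d k)) i g⁻¹ * ((B (d i)) k g) := by
  rw [tr]
  refine Finset.sum_congr rfl fun i _ => ?_
  rw [mul_apply_eq_comp, ← adjoint_inner_left, inner_Hn]
  refine Finset.sum_congr rfl fun k _ => ?_
  refine tsum_congr fun g => ?_
  rw [adj_coef hA]
  simp

lemma trace_comm {A B : Hn G n →L[ℂ] Hn G n} (hA : Comm A) (hB : Comm B) :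
    tr (A * B) = tr (B * A) := by
  rw [tr_mul_expand hA, tr_mul_expand hB]
  rw [Finset.sum_comm]
  refine Finset.sum_congr rfl fun i _ => Finset.sum_congr rfl fun k _ => ?_
  rw [← (Equiv.inv G).tsum_eq (fun g => (B (d k)) i g⁻¹ * (A (d i)) k g)]
  refine tsum_congr fun g => ?_
  simp [mul_comm]

end FIU
end S3

noncomputable section S4
namespace FIU
set_option linter.unusedSectionVars false
open ContinuousLinearMap

local notation "⟪" x ", " y "⟫" => @inner ℂ _ _ x y

variable {G : Type*} [Group G] {n : ℕ}

lemma tr_sum {ι : Type*} (s : Finset ι) (F : ι → (Hn G n →L[ℂ] Hn G n)) :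
    tr (∑ m ∈ s, F m) = ∑ m ∈ s, tr (F m) := by
  unfold tr
  rw [Finset.sum_comm]
  exact Finset.sum_congr rfl fun i _ => by
    rw [ContinuousLinearMap.sum_apply, inner_sum]

lemma tr_smul (c : ℂ) (S : Hn G n →L[ℂ] Hn G n) : tr (c • S) = c * tr S := by
  unfold tr
  rw [Finset.mul_sum]
  exact Finset.sum_congr rfl fun i _ => by
    rw [ContinuousLinearMap.smul_apply, inner_smul_right]

lemma one_sub_smul_pow (A : Hn G n →L[ℂ] Hn G n) (r : ℂ) (k : ℕ) :
    (1 - r • A) ^ k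
      = ∑ m ∈ Finset.range (k + 1), ((-r) ^ m * (k.choose m : ℂ)) • A ^ m := by
  rw [sub_eq_add_neg, add_comm, (Commute.one_right (-(r • A))).add_pow]
  refine Finset.sum_congr rfl fun m _ => ?_
  have hns : (-(r • A)) = ((-r) • A) := (neg_smul r A).symm
  rw [one_pow, mul_one, hns, smul_pow]
  have h1 : ((k.choose m : ℕ) : Hn G n →L[ℂ] Hn G n) = ((k.choose m : ℂ)) • 1 := by
    rw [← map_natCast (algebraMap ℂ (Hn G n →L[ℂ] Hn G n)) (k.choose m),
      Algebra.algebraMap_eq_smul_one]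
  rw [h1, mul_smul_comm, mul_one, smul_smul, mul_comm]

lemma tr_pow_eq {A B : Hn G n →L[ℂ] Hn G n} (h : ∀ j, tr (A ^ j) = tr (B ^ j))
    (r : ℂ) (k : ℕ) : tr ((1 - r • A) ^ k) = tr ((1 - r • B) ^ k) := by
  rw [one_sub_smul_pow, one_sub_smul_pow, tr_sum, tr_sum]
  exact Finset.sum_congr rfl fun m _ => by rw [tr_smul, tr_smul, h m]

end FIU
end S4

noncomputable section S5
namespace FIU
open ContinuousLinearMap RCLike

local notation "⟪" x ", " y "⟫" => @inner ℂ _ _ x y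

variable {E : Type*} [NormedAddCommGroup E] [InnerProductSpace ℂ E] [CompleteSpace E]
variable {C : E →L[ℂ] E}

lemma sa_move (hsa : IsSelfAdjoint C) (x y : E) : ⟪C x, y⟫ = ⟪x, C y⟫ := by
  conv_lhs => rw [← isSelfAdjoint_iff'.mp hsa]
  rw [adjoint_inner_left]

lemma sa_pow_move (hsa : IsSelfAdjoint C) (m : ℕ) (x y : E) :
    ⟪(C ^ m) x, y⟫ = ⟪x, (C ^ m) y⟫ := sa_move (hsa.pow m) x y

lemma norm_pow_apply_antitone (h1 : ∀ v, ‖C v‖ ≤ ‖v‖) (v : E) :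
    Antitone fun k => ‖(C ^ k) v‖ := by
  apply antitone_nat_of_succ_le
  intro k
  rw [pow_succ']
  exact h1 ((C ^ k) v)

-- `C - C^2 ≥ 0` for `0 ≤ C ≤ 1`.
lemma re_inner_sub_sq_nonneg (hsa : IsSelfAdjoint C)
    (hp : ∀ v, 0 ≤ re ⟪v, C v⟫) (hq : ∀ v, re ⟪v, C v⟫ ≤ re ⟪v, v⟫) (u : E) :
    re ⟪u, C (C u)⟫ ≤ re ⟪u, C u⟫ := by
  have hD : ∀ z, 0 ≤ re ⟪z, z - C z⟫ := by
    intro z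
    rw [inner_sub_right, map_sub]
    linarith [hq z]
  have hop : C - C * C = (1 - C) * C * (1 - C) + C * (1 - C) * C := by noncomm_ring
  have h1 : re ⟪u, (C - C * C) u⟫ = re ⟪u, C u⟫ - re ⟪u, C (C u)⟫ := by
    rw [ContinuousLinearMap.sub_apply, inner_sub_right, map_sub]
    rfl
  have h2 : 0 ≤ re ⟪u, (C - C * C) u⟫ := by
    rw [hop, ContinuousLinearMap.add_apply, inner_add_right, map_add]
    have e1 : re ⟪u, ((1 - C) * C * (1 - C)) u⟫ = re ⟪u - C u, C (u - C u)⟫ := by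
      have : ((1 - C) * C * (1 - C)) u = (1 - C) (C ((1 - C) u)) := rfl
      rw [this]
      have h3 : (1 - C) u = u - C u := rfl
      rw [h3, ← sa_move (by simpa using (IsSelfAdjoint.one _).sub hsa) u]
      have h4 : (1 - C) u = u - C u := rfl
      rw [h4]
    have e2 : re ⟪u, (C * (1 - C) * C) u⟫ = re ⟪C u, C u - C (C u)⟫ := by
      have : (C * (1 - C) * C) u = C ((1 - C) (C u)) := rfl
      rw [this, ← sa_move hsa u]
      rfl
    rw [e1, e2]
    linarith [hp (u - C u), hD (C u)]
  linarith

end FIU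
end S5

noncomputable section S5b
namespace FIU
open ContinuousLinearMap RCLike Filter Topology

local notation "⟪" x ", " y "⟫" => @inner ℂ _ _ x y

variable {E : Type*} [NormedAddCommGroup E] [InnerProductSpace ℂ E] [CompleteSpace E]
variable {C : E →L[ℂ] E}

lemma pow_apply_add (m k : ℕ) (v : E) : (C ^ m) ((C ^ k) v) = (C ^ (m + k)) v := by
  rw [pow_add]; rfl

lemma re_inner_pow_ge (hsa : IsSelfAdjoint C) (h1 : ∀ v, ‖C v‖ ≤ ‖v‖)
    (hp : ∀ v, 0 ≤ re ⟪v, C v⟫) (hq : ∀ v, re ⟪v, C v⟫ ≤ re ⟪v, v⟫) (v : E) (j : ℕ) :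
    (⨅ k, ‖(C ^ k) v‖) ^ 2 ≤ re ⟪v, (C ^ j) v⟫ := by
  have hbdd : BddBelow (Set.range fun k => ‖(C ^ k) v‖) :=
    ⟨0, by rintro _ ⟨k, rfl⟩; exact norm_nonneg _⟩
  have hL0 : 0 ≤ ⨅ k, ‖(C ^ k) v‖ := le_ciInf fun k => norm_nonneg _
  have key : ∀ m : ℕ, (⨅ k, ‖(C ^ k) v‖) ^ 2 ≤ ‖(C ^ m) v‖ ^ 2 := fun m =>
    pow_le_pow_left₀ hL0 (ciInf_le hbdd m) 2
  rcases Nat.even_or_odd j with ⟨m, hm⟩ | ⟨m, hm⟩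
  · have : ⟪v, (C ^ j) v⟫ = ⟪(C ^ m) v, (C ^ m) v⟫ := by
      rw [sa_pow_move hsa m, pow_apply_add, ← hm]
    rw [this, inner_self_eq_norm_sq]
    exact key m
  · have hop : C ^ j = C ^ m * C * C ^ m := by
      rw [hm, show 2 * m + 1 = m + 1 + m from by ring, pow_add, pow_succ]
    have h2 : ⟪v, (C ^ j) v⟫ = ⟪(C ^ m) v, C ((C ^ m) v)⟫ := by
      rw [hop]
      exact (sa_pow_move hsa m v (C ((C ^ m) v))).symm
    rw [h2]
    have h3 := re_inner_sub_sq_nonneg hsa hp hq ((C ^ m) v)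
    have h4 : re ⟪(C ^ m) v, C (C ((C ^ m) v))⟫ = ‖C ((C ^ m) v)‖ ^ 2 := by
      rw [← sa_move hsa, inner_self_eq_norm_sq]
    have h5 : ‖C ((C ^ m) v)‖ = ‖(C ^ (m + 1)) v‖ := by rw [pow_succ']; rfl
    calc (⨅ k, ‖(C ^ k) v‖) ^ 2 ≤ ‖(C ^ (m + 1)) v‖ ^ 2 := key (m + 1)
      _ = re ⟪(C ^ m) v, C (C ((C ^ m) v))⟫ := by rw [h4, h5]
      _ ≤ re ⟪(C ^ m) v, C ((C ^ m) v)⟫ := h3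

lemma exists_lim_pow (hsa : IsSelfAdjoint C) (h1 : ∀ v, ‖C v‖ ≤ ‖v‖)
    (hp : ∀ v, 0 ≤ re ⟪v, C v⟫) (hq : ∀ v, re ⟪v, C v⟫ ≤ re ⟪v, v⟫) (v : E) :
    ∃ w, Tendsto (fun k => (C ^ k) v) atTop (𝓝 w) := by
  set a : ℕ → ℝ := fun k => ‖(C ^ k) v‖ with ha
  set L : ℝ := ⨅ k, a k with hL
  have hbdd : BddBelow (Set.range a) := ⟨0, by rintro _ ⟨k, rfl⟩; exact norm_nonneg _⟩
  have hanti : Antitone a := norm_pow_apply_antitone h1 v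
  have hLa : Tendsto a atTop (𝓝 L) := tendsto_atTop_ciInf hanti hbdd
  have hsq : Tendsto (fun k => a k ^ 2) atTop (𝓝 (L ^ 2)) := hLa.pow 2
  apply cauchySeq_tendsto_of_complete
  rw [Metric.cauchySeq_iff]
  intro ε hε
  have hev : ∀ᶠ N in atTop, a N ^ 2 < L ^ 2 + ε ^ 2 / 2 :=
    hsq.eventually_lt_const (lt_add_of_pos_right _ (by positivity))
  obtain ⟨N, hN⟩ := hev.exists
  refine ⟨N, fun m hm k hk => ?_⟩
  rw [dist_eq_norm]
  have hnorm : ‖(C ^ m) v - (C ^ k) v‖ ^ 2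
      = a m ^ 2 - 2 * re ⟪(C ^ m) v, (C ^ k) v⟫ + a k ^ 2 := by
    rw [ha]
    exact norm_sub_sq (𝕜 := ℂ) _ _
  have hip : re ⟪(C ^ m) v, (C ^ k) v⟫ = re ⟪v, (C ^ (m + k)) v⟫ := by
    rw [sa_pow_move hsa m, pow_apply_add]
  have hge : L ^ 2 ≤ re ⟪(C ^ m) v, (C ^ k) v⟫ := by
    rw [hip]; exact re_inner_pow_ge hsa h1 hp hq v (m + k)
  have ham : a m ≤ a N := hanti hm
  have hak : a k ≤ a N := hanti hk
  have h0m : (0:ℝ) ≤ a m := norm_nonneg _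
  have h0k : (0:ℝ) ≤ a k := norm_nonneg _
  have hm2 : a m ^ 2 ≤ a N ^ 2 := pow_le_pow_left₀ h0m ham 2
  have hk2 : a k ^ 2 ≤ a N ^ 2 := pow_le_pow_left₀ h0k hak 2
  have hfin : ‖(C ^ m) v - (C ^ k) v‖ ^ 2 < ε ^ 2 := by
    rw [hnorm]; nlinarith [hN, hge, hm2, hk2]
  exact lt_of_pow_lt_pow_left₀ 2 (le_of_lt hε) hfin

lemma lim_fixed {v w : E} (hw : Tendsto (fun k => (C ^ k) v) atTop (𝓝 w)) : C w = w := by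
  have h2 : Tendsto (fun k => (C ^ (k + 1)) v) atTop (𝓝 w) :=
    hw.comp (tendsto_add_atTop_nat 1)
  have h3 : Tendsto (fun k => C ((C ^ k) v)) atTop (𝓝 (C w)) :=
    (C.continuous.tendsto w).comp hw
  have heq : (fun k => C ((C ^ k) v)) = fun k => (C ^ (k + 1)) v :=
    funext fun k => by rw [pow_succ']; rfl
  exact tendsto_nhds_unique (heq ▸ h3) h2

end FIU
end S5b

noncomputable section S6
namespace FIU
open ContinuousLinearMap RCLike Filter Topology

local notation "⟪" x ", " y "⟫" => @inner ℂ _ _ x y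

variable {E : Type*} [NormedAddCommGroup E] [InnerProductSpace ℂ E] [CompleteSpace E]

/-- `1 - r • (P* P)`. -/
def CC (P : E →L[ℂ] E) (r : ℝ) : E →L[ℂ] E :=
  1 - ((r : ℂ)) • (ContinuousLinearMap.adjoint P * P)

lemma CC_apply (P : E →L[ℂ] E) (r : ℝ) (v : E) :
    CC P r v = v - (r : ℂ) • (ContinuousLinearMap.adjoint P (P v)) := rfl

lemma CC_sa (P : E →L[ℂ] E) (r : ℝ) : IsSelfAdjoint (CC P r) := by
  rw [IsSelfAdjoint, CC, star_sub, star_one, star_smul, star_mul, star_eq_adjoint,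
    star_eq_adjoint, adjoint_adjoint]
  norm_num [Complex.conj_ofReal]

lemma re_inner_CC (P : E →L[ℂ] E) (r : ℝ) (v : E) :
    re ⟪v, CC P r v⟫ = ‖v‖ ^ 2 - r * ‖P v‖ ^ 2 := by
  rw [CC_apply, inner_sub_right, inner_smul_right, adjoint_inner_right, map_sub]
  simp only [RCLike.re_to_complex, Complex.re_ofReal_mul]
  rw [← RCLike.re_to_complex (x := (⟪v, v⟫ : ℂ)), ← RCLike.re_to_complex (x := (⟪P v, P v⟫ : ℂ)),
    inner_self_eq_norm_sq, inner_self_eq_norm_sq]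

lemma sq_le_imp {a b : ℝ} (ha : 0 ≤ a) (hb : 0 ≤ b) (h : a ^ 2 ≤ b ^ 2) : a ≤ b := by
  nlinarith

lemma CC_norm (P : E →L[ℂ] E) {r : ℝ} (hr0 : 0 ≤ r) (hr1 : r * ‖P‖ ^ 2 ≤ 1) (v : E) :
    ‖CC P r v‖ ≤ ‖v‖ := by
  have hQn : ‖ContinuousLinearMap.adjoint P (P v)‖ ≤ ‖P‖ * ‖P v‖ := by
    calc ‖ContinuousLinearMap.adjoint P (P v)‖
        ≤ ‖ContinuousLinearMap.adjoint P‖ * ‖P v‖ := le_opNorm _ _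
      _ = ‖P‖ * ‖P v‖ := by
          rw [LinearIsometryEquiv.norm_map ContinuousLinearMap.adjoint P]
  have hsq : ‖CC P r v‖ ^ 2 ≤ ‖v‖ ^ 2 := by
    have hns := norm_sub_sq (𝕜 := ℂ) v ((r : ℂ) • (ContinuousLinearMap.adjoint P (P v)))
    rw [CC_apply]
    rw [hns]
    have h1 : re ⟪v, (r : ℂ) • (ContinuousLinearMap.adjoint P (P v))⟫ = r * ‖P v‖ ^ 2 := by
      rw [inner_smul_right, adjoint_inner_right]
      simp only [RCLike.re_to_complex, Complex.re_ofReal_mul]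
      rw [← RCLike.re_to_complex (x := (⟪P v, P v⟫ : ℂ)), inner_self_eq_norm_sq]
    have h2 : ‖(r : ℂ) • (ContinuousLinearMap.adjoint P (P v))‖
        = r * ‖ContinuousLinearMap.adjoint P (P v)‖ := by
      rw [norm_smul]
      simp [abs_of_nonneg hr0]
    rw [h1, h2]
    have e1 : ‖ContinuousLinearMap.adjoint P (P v)‖ ^ 2 ≤ ‖P‖ ^ 2 * ‖P v‖ ^ 2 := by
      nlinarith [hQn, norm_nonneg (ContinuousLinearMap.adjoint P (P v)), norm_nonneg P,
        norm_nonneg (P v), mul_nonneg (norm_nonneg P) (norm_nonneg (P v))]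
    nlinarith [e1, mul_le_mul_of_nonneg_left e1 (mul_nonneg hr0 hr0),
      mul_le_mul_of_nonneg_right hr1 (mul_nonneg hr0 (sq_nonneg ‖P v‖)),
      mul_nonneg hr0 (sq_nonneg ‖P v‖)]
  exact sq_le_imp (norm_nonneg _) (norm_nonneg _) hsq

lemma CC_pos (P : E →L[ℂ] E) {r : ℝ} (hr0 : 0 ≤ r) (hr1 : r * ‖P‖ ^ 2 ≤ 1) (v : E) :
    0 ≤ re ⟪v, CC P r v⟫ := by
  rw [re_inner_CC]
  have hPv : ‖P v‖ ≤ ‖P‖ * ‖v‖ := le_opNorm _ _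
  have e1 : ‖P v‖ ^ 2 ≤ ‖P‖ ^ 2 * ‖v‖ ^ 2 := by
    nlinarith [norm_nonneg (P v), norm_nonneg v, norm_nonneg P,
      mul_nonneg (norm_nonneg P) (norm_nonneg v)]
  nlinarith [mul_le_mul_of_nonneg_left e1 hr0,
    mul_le_mul_of_nonneg_right hr1 (sq_nonneg ‖v‖)]

lemma CC_le_one (P : E →L[ℂ] E) {r : ℝ} (hr0 : 0 ≤ r) (v : E) :
    re ⟪v, CC P r v⟫ ≤ re ⟪v, v⟫ := by
  rw [re_inner_CC, inner_self_eq_norm_sq]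
  nlinarith [norm_nonneg (P v)]

lemma CC_fix_of (P : E →L[ℂ] E) (r : ℝ) {v : E} (h : P v = 0) : CC P r v = v := by
  rw [CC_apply, h, map_zero, smul_zero, sub_zero]

lemma CC_fix_imp (P : E →L[ℂ] E) {r : ℝ} (hr : r ≠ 0) {w : E} (h : CC P r w = w) :
    P w = 0 := by
  rw [CC_apply] at h
  have h2 : (r : ℂ) • (ContinuousLinearMap.adjoint P (P w)) = 0 := by
    have := sub_eq_self.mp h
    exact this
  have h3 : ContinuousLinearMap.adjoint P (P w) = 0 := by
    rcases smul_eq_zero.mp h2 with hc | hz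
    · exact absurd (Complex.ofReal_eq_zero.mp hc) hr
    · exact hz
  have h4 : ⟪P w, P w⟫ = 0 := by
    rw [← adjoint_inner_right, h3, inner_zero_right]
  exact inner_self_eq_zero.mp h4

lemma pow_shift {M : Type*} [Monoid M] (a b : M) (m : ℕ) :
    (a * b) ^ (m + 1) = a * ((b * a) ^ m * b) := by
  induction m with
  | zero => simp
  | succ m ih => rw [pow_succ, ih, pow_succ]; simp [mul_assoc]

end FIU
end S6

noncomputable section S7
namespace FIU
open ContinuousLinearMap RCLike Filter Topology

local notation "⟪" x ", " y "⟫" => @inner ℂ _ _ x y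

variable {G : Type*} [Group G] {n : ℕ}

lemma Hn_zero_apply (i : Fin n) (g : G) : ((0 : Hn G n) i : G → ℂ) g = 0 := rfl

theorem ker_eq_bot (P : Hn G n →L[ℂ] Hn G n) (hPc : Comm P)
    (hsurj : ∀ (i : Fin n) (g : G), ∃ y, P y = u i g) (x : Hn G n) (hx : P x = 0) :
    x = 0 := by
  classical
  set Q := ContinuousLinearMap.adjoint P with hQ
  have hQc : Comm Q := hPc.adjoint
  have kerQ : ∀ w, Q w = 0 → w = 0 := by
    intro w hw
    refine Hn_ext fun i g => ?_
    obtain ⟨y, hy⟩ := hsurj i g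
    have hz : w i g = 0 := by
      rw [← inner_u i g w, ← hy, ← adjoint_inner_right P y w, ← hQ, hw, inner_zero_right]
    rw [hz, Hn_zero_apply]
  set r : ℝ := (‖P‖ ^ 2 + 1)⁻¹ with hr
  have hden : (0:ℝ) < ‖P‖ ^ 2 + 1 := by positivity
  have hr0 : 0 < r := by rw [hr]; positivity
  have hrc : r * (‖P‖ ^ 2 + 1) = 1 := inv_mul_cancel₀ hden.ne'
  have hr1 : r * ‖P‖ ^ 2 ≤ 1 := by nlinarith [hr0.le]
  have hQn : ‖Q‖ = ‖P‖ := LinearIsometryEquiv.norm_map ContinuousLinearMap.adjoint P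
  have hr1' : r * ‖Q‖ ^ 2 ≤ 1 := by rw [hQn]; exact hr1
  set C := CC P r with hC
  set C' := CC Q r with hC'
  have hCsa : IsSelfAdjoint C := CC_sa P r
  have hC'sa : IsSelfAdjoint C' := CC_sa Q r
  have hCn : ∀ v, ‖C v‖ ≤ ‖v‖ := CC_norm P hr0.le hr1
  have hC'n : ∀ v, ‖C' v‖ ≤ ‖v‖ := CC_norm Q hr0.le hr1'
  have hCp : ∀ v, 0 ≤ re ⟪v, C v⟫ := CC_pos P hr0.le hr1
  have hC'p : ∀ v, 0 ≤ re ⟪v, C' v⟫ := CC_pos Q hr0.le hr1'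
  have hCq : ∀ v, re ⟪v, C v⟫ ≤ re ⟪v, v⟫ := CC_le_one P hr0.le
  have hC'q : ∀ v, re ⟪v, C' v⟫ ≤ re ⟪v, v⟫ := CC_le_one Q hr0.le
  have hCc : Comm C := Comm.sub Comm.one ((hQc.mul hPc).smul _)
  have hlim : ∀ i : Fin n, ∃ w, Tendsto (fun k => (C ^ k) (d i)) atTop (𝓝 w) :=
    fun i => exists_lim_pow hCsa hCn hCp hCq (d i)
  choose w hw using hlim
  have hlim' : ∀ i : Fin n, ∃ w, Tendsto (fun k => (C' ^ k) (d i)) atTop (𝓝 w) :=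
    fun i => exists_lim_pow hC'sa hC'n hC'p hC'q (d i)
  choose w' hw' using hlim'
  have hw'0 : ∀ i, w' i = 0 := fun i =>
    kerQ _ (CC_fix_imp Q (ne_of_gt hr0) (lim_fixed (hw' i)))
  -- traces of powers agree
  have hj : ∀ j : ℕ, tr ((Q * P) ^ j) = tr ((P * Q) ^ j) := by
    intro j
    cases j with
    | zero => simp
    | succ m =>
      rw [pow_shift Q P m, trace_comm hQc (((hPc.mul hQc).pow m).mul hPc),
        mul_assoc, ← pow_succ]
  have htr : ∀ k : ℕ, tr (C ^ k) = tr (C' ^ k) := by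
    intro k
    have e1 : C = 1 - ((r : ℂ)) • (Q * P) := rfl
    have e2 : C' = 1 - ((r : ℂ)) • (P * Q) := by
      rw [hC', CC, hQ, adjoint_adjoint, ← hQ]
    rw [e1, e2]
    exact tr_pow_eq hj _ k
  have htr' : Tendsto (fun k => tr (C' ^ k)) atTop (𝓝 (0 : ℂ)) := by
    have h8 : ∀ i : Fin n, Tendsto (fun k => ⟪d i, (C' ^ k) (d i)⟫) atTop (𝓝 (0 : ℂ)) := by
      intro i
      have h0 : Tendsto (fun k => (C' ^ k) (d i)) atTop (𝓝 (0 : Hn G n)) := by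
        rw [← hw'0 i]; exact hw' i
      have h9 : Tendsto (fun k => ⟪d i, (C' ^ k) (d i)⟫) atTop (𝓝 ⟪d i, (0 : Hn G n)⟫) :=
        (tendsto_const_nhds (x := d i) (f := atTop)).inner h0
      simpa using h9
    have hsum : Tendsto (fun k => ∑ i : Fin n, ⟪d i, (C' ^ k) (d i)⟫) atTop
        (𝓝 (∑ _i : Fin n, (0 : ℂ))) :=
      tendsto_finset_sum _ (fun i _ => h8 i)
    simpa [tr] using hsum
  have htrC : Tendsto (fun k => tr (C ^ k)) atTop (𝓝 (∑ i, ⟪d i, w i⟫)) := by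
    have h8 : ∀ i : Fin n, Tendsto (fun k => ⟪d i, (C ^ k) (d i)⟫) atTop
        (𝓝 ⟪d i, w i⟫) :=
      fun i => (tendsto_const_nhds (x := d i) (f := atTop)).inner (hw i)
    have hsum : Tendsto (fun k => ∑ i : Fin n, ⟪d i, (C ^ k) (d i)⟫) atTop
        (𝓝 (∑ i : Fin n, ⟪d i, w i⟫)) :=
      tendsto_finset_sum _ (fun i _ => h8 i)
    simpa [tr] using hsum
  have hsum0 : (∑ i, ⟪d i, w i⟫) = 0 := by
    refine tendsto_nhds_unique htrC ?_
    have : (fun k => tr (C ^ k)) = fun k => tr (C' ^ k) := funext htr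
    rw [this]
    exact htr'
  have hwd : ∀ i, ⟪d i, w i⟫ = ((‖w i‖ : ℂ)) ^ 2 := by
    intro i
    have h1 : Tendsto (fun k => ⟪d i, (C ^ k) (d i)⟫) atTop (𝓝 ⟪d i, w i⟫) :=
      (tendsto_const_nhds (x := d i) (f := atTop)).inner (hw i)
    have hsm : StrictMono (fun k : ℕ => 2 * k) := strictMono_nat_of_lt_succ (fun k => by omega)
    have h2 : Tendsto (fun k => ⟪d i, (C ^ (2 * k)) (d i)⟫) atTop (𝓝 ⟪d i, w i⟫) :=
      h1.comp hsm.tendsto_atTop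
    have h3 : (fun k => ⟪d i, (C ^ (2 * k)) (d i)⟫)
        = fun k => ⟪(C ^ k) (d i), (C ^ k) (d i)⟫ := by
      funext k
      rw [two_mul, ← pow_apply_add, ← sa_pow_move hCsa k]
    have h4 : Tendsto (fun k => ⟪(C ^ k) (d i), (C ^ k) (d i)⟫) atTop (𝓝 ⟪w i, w i⟫) :=
      (hw i).inner (hw i)
    have h5 := tendsto_nhds_unique (h3 ▸ h2) h4
    rw [h5, inner_self_eq_norm_sq_to_K]
    rfl
  have hwi0 : ∀ i, w i = 0 := by
    have hreal : ∑ i, ‖w i‖ ^ 2 = 0 := by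
      have hc : ((∑ i, (‖w i‖ : ℝ) ^ 2 : ℝ) : ℂ) = 0 := by
        push_cast
        rw [← hsum0]
        exact Finset.sum_congr rfl fun i _ => by rw [hwd i]
      exact_mod_cast hc
    intro i
    have h5 : ‖w i‖ ^ 2 = 0 :=
      (Finset.sum_eq_zero_iff_of_nonneg (fun i _ => sq_nonneg ‖w i‖)).mp hreal i
        (Finset.mem_univ i)
    have h6 : ‖w i‖ = 0 := by nlinarith [norm_nonneg (w i)]
    exact norm_eq_zero.mp h6
  have hCx : ∀ k : ℕ, (C ^ k) x = x := by
    intro k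
    induction k with
    | zero => rfl
    | succ m ih =>
      have hCx1 : C x = x := CC_fix_of P r hx
      rw [pow_succ]
      show (C ^ m) (C x) = x
      rw [hCx1, ih]
  refine Hn_ext fun i g => ?_
  have hconst : ∀ k : ℕ, ⟪RT g⁻¹ ((C ^ k) (d i)), x⟫ = x i g := by
    intro k
    have e2 : (C ^ k) (u i g) = RT g⁻¹ ((C ^ k) (d i)) := by
      rw [u_def]
      exact (hCc.pow k) g⁻¹ (d i)
    rw [← e2, sa_pow_move hCsa k, hCx k, inner_u]
  have hlimx : Tendsto (fun k => ⟪RT g⁻¹ ((C ^ k) (d i)), x⟫) atTop (𝓝 (0 : ℂ)) := by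
    have h6 : Tendsto (fun k => RT g⁻¹ ((C ^ k) (d i))) atTop (𝓝 (RT g⁻¹ (w i))) :=
      ((RT g⁻¹).continuous.tendsto (w i)).comp (hw i)
    have h7 : Tendsto (fun k => ⟪RT g⁻¹ ((C ^ k) (d i)), x⟫) atTop
        (𝓝 ⟪RT g⁻¹ (w i), x⟫) :=
      h6.inner (tendsto_const_nhds (x := x) (f := atTop))
    rw [hwi0 i] at h7
    simpa using h7
  have hxz : x i g = 0 := by
    refine tendsto_nhds_unique ?_ hlimx
    have : (fun _ : ℕ => x i g) = fun k => ⟪RT g⁻¹ ((C ^ k) (d i)), x⟫ :=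
      funext fun k => (hconst k).symm
    rw [← this]
    exact tendsto_const_nhds
  rw [hxz, Hn_zero_apply]

end FIU
end S7

noncomputable section S8
namespace FIU
open ContinuousLinearMap RCLike Filter Topology

variable {G : Type*} [Group G] {n : ℕ}

lemma d_coe (j i : Fin n) (g : G) :
    (d j i : G → ℂ) g = if i = j ∧ g = 1 then 1 else 0 := by
  show ((if i = j then lp.single 2 (1 : G) (1 : ℂ) else 0 : L2 G) : G → ℂ) g = _
  by_cases h : i = j
  · rw [if_pos h, lp.single_apply]
    by_cases hg : g = 1
    · subst hg; simp [h]
    · rw [Pi.single_eq_of_ne hg]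
      simp [h, hg]
  · rw [if_neg h]
    simp [h]

def col (ξ : Matrix (Fin n) (Fin n) (L2 G)) (j : Fin n) : Hn G n := WithLp.toLp 2 fun k => ξ k j

theorem TOp_col (f : Matrix (Fin n) (Fin n) (G →₀ ℂ)) (ξ : Matrix (Fin n) (Fin n) (L2 G))
    (hξ : matConv f (fun i j => ⇑(ξ i j)) = oneHat G n) (j : Fin n) :
    TOp f (col ξ j) = d j := by
  refine Hn_ext fun i g => ?_
  have h1 : (TOp f (col ξ j) i : G → ℂ) g = ∑ k, (lam (f i k) (ξ k j) : G → ℂ) g := by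
    rw [TOp_apply, lp.coeFn_sum, Finset.sum_apply]
    rfl
  rw [h1, d_coe]
  calc ∑ k, (lam (f i k) (ξ k j) : G → ℂ) g
      = matConv f (fun i j => ⇑(ξ i j)) i j g := by
        rw [show matConv f (fun i j => ⇑(ξ i j)) i j = ∑ k, fconv (f i k) (ξ k j) from rfl,
          Finset.sum_apply]
        exact Finset.sum_congr rfl fun k _ => lam_apply _ _ _
    _ = oneHat G n i j g := by rw [hξ]
    _ = if i = j ∧ g = 1 then 1 else 0 := rfl

end FIU
end S8


/-- If `ξ₁, ξ₂ ∈ M_n(ℓ²(G))` both satisfy `fξ₁ = 1̂` and `fξ₂ = 1̂`, then `ξ₁ = ξ₂`: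
the ℓ² formal inverse of `f ∈ M_n(ℂ[G])`, when it exists, is unique. -/
theorem formal_inverse_unique {G : Type*} [Group G] [Countable G] {n : ℕ}
    (f : Matrix (Fin n) (Fin n) (G →₀ ℂ))
    (ξ₁ ξ₂ : Matrix (Fin n) (Fin n) (lp (fun _ : G => ℂ) 2))
    (hξ₁ : matConv f (fun i j => ⇑(ξ₁ i j)) = oneHat G n)
    (hξ₂ : matConv f (fun i j => ⇑(ξ₂ i j)) = oneHat G n) :
    ξ₁ = ξ₂ := by
  classical
  have h1 : ∀ j, FIU.TOp f (FIU.col ξ₁ j) = FIU.d j := FIU.TOp_col f ξ₁ hξ₁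
  have h2 : ∀ j, FIU.TOp f (FIU.col ξ₂ j) = FIU.d j := FIU.TOp_col f ξ₂ hξ₂
  have hPc : FIU.Comm (FIU.TOp f) := fun γ x => FIU.TOp_comm f γ x
  have hsurj : ∀ (i : Fin n) (g : G), ∃ y, FIU.TOp f y = FIU.u i g := by
    intro i g
    refine ⟨FIU.RT g⁻¹ (FIU.col ξ₁ i), ?_⟩
    rw [FIU.TOp_comm, h1 i, FIU.u_def]
  funext i j
  have hx : FIU.TOp f (FIU.col ξ₁ j - FIU.col ξ₂ j) = 0 := by
    rw [map_sub, h1 j, h2 j, sub_self]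
  have hx0 := FIU.ker_eq_bot (FIU.TOp f) hPc hsurj _ hx
  have h3 : ξ₁ i j - ξ₂ i j = 0 := by simpa [FIU.col] using congrArg (fun z => z i) hx0
  exact sub_eq_zero.mp h3
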